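/- Let hat : ℝ³ → ℝ^{3×3} be the hat map sending θ = (θ₁,θ₂,θ₃) to the skew-symmetric matrix [[0, −θ₃, θ₂], [θ₃, 0, −θ₁], [−θ₂, θ₁, 0]]. Then for every θ ∈ ℝ³ with 0 < ‖θ‖ < π, the rotation matrix R = exp(hat(θ)) satisfies the logarithm formula hat(θ) = (‖θ‖ / (2 sin‖θ‖)) · (R − Rᵀ). -/

import Mathlib

set_option maxHeartbeats 1000000


open Matrix

/-- The hat map sending `θ` to the skew-symmetric matrix satisfying `hat θ *ᵥ x = θ × x`. -/
noncomputable def hat (θ : Fin 3 → ℝ) : Matrix (Fin 3) (Fin 3) ℝ :=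
  !![0, -θ 2, θ 1; θ 2, 0, -θ 0; -θ 1, θ 0, 0]

/-- The Euclidean norm on `ℝ³`. -/
noncomputable def enorm3 (θ : Fin 3 → ℝ) : ℝ := Real.sqrt (θ 0 ^ 2 + θ 1 ^ 2 + θ 2 ^ 2)

attribute [local instance] Matrix.linftyOpNormedRing Matrix.linftyOpNormedAlgebra

lemma hat_transpose (θ : Fin 3 → ℝ) : (hat θ)ᵀ = -hat θ := by
  ext i j
  fin_cases i <;> fin_cases j <;> simp [hat]

lemma hat_cube (θ : Fin 3 → ℝ) :
    hat θ ^ 3 = (-(θ 0 ^ 2 + θ 1 ^ 2 + θ 2 ^ 2)) • hat θ := by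
  ext i j
  fin_cases i <;> fin_cases j <;>
    simp [hat, pow_succ, Matrix.mul_apply, Fin.sum_univ_three] <;> ring

lemma hat_odd_pow (θ : Fin 3 → ℝ) (k : ℕ) :
    hat θ ^ (2 * k + 1) = ((-(θ 0 ^ 2 + θ 1 ^ 2 + θ 2 ^ 2)) ^ k) • hat θ := by
  induction k with
  | zero => simp
  | succ k ih =>
    calc hat θ ^ (2 * (k + 1) + 1) = hat θ ^ (2 * k + 1) * hat θ ^ 2 := by
          rw [← pow_add, show 2 * k + 1 + 2 = 2 * (k + 1) + 1 from by ring]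
      _ = ((-(θ 0 ^ 2 + θ 1 ^ 2 + θ 2 ^ 2)) ^ k) • (hat θ ^ 3) := by
          rw [ih, smul_mul_assoc, show hat θ * hat θ ^ 2 = hat θ ^ 3 from (pow_succ' _ 2).symm]
      _ = ((-(θ 0 ^ 2 + θ 1 ^ 2 + θ 2 ^ 2)) ^ (k + 1)) • hat θ := by
          rw [hat_cube, smul_smul, ← pow_succ]

/-- **Logarithm formula on SO(3).** For every `θ` with `0 < ‖θ‖ < π`, the rotation matrix
`R = exp(hat θ)` satisfies `hat θ = (‖θ‖ / (2 sin‖θ‖)) · (R − Rᵀ)`. -/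
theorem so3_log_formula (θ : Fin 3 → ℝ) (h0 : 0 < enorm3 θ) (hπ : enorm3 θ < Real.pi) :
    hat θ = (enorm3 θ / (2 * Real.sin (enorm3 θ))) •
      (NormedSpace.exp (hat θ) - (NormedSpace.exp (hat θ))ᵀ) := by
  set r := enorm3 θ with hr
  have hr0 : r ≠ 0 := ne_of_gt h0
  have hsin : 0 < Real.sin r := Real.sin_pos_of_pos_of_lt_pi h0 hπ
  have hr2 : θ 0 ^ 2 + θ 1 ^ 2 + θ 2 ^ 2 = r ^ 2 := by
    rw [hr, enorm3, Real.sq_sqrt (by positivity)]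
  set A := hat θ with hA
  -- transpose of exp
  have htr : (NormedSpace.exp A)ᵀ = NormedSpace.exp (-A) := by
    rw [← Matrix.exp_transpose, hA, hat_transpose]
  -- the key series computation
  have hsum : HasSum (fun n : ℕ => ((n.factorial : ℝ)⁻¹ • A ^ n -
      (n.factorial : ℝ)⁻¹ • (-A) ^ n)) ((2 * Real.sin r / r) • A) := by
    have heven : HasSum (fun k : ℕ => ((((2 * k).factorial : ℝ))⁻¹ • A ^ (2 * k) -
        (((2 * k).factorial : ℝ))⁻¹ • (-A) ^ (2 * k))) 0 := by
      have : ∀ k : ℕ, ((((2 * k).factorial : ℝ))⁻¹ • A ^ (2 * k) -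
          (((2 * k).factorial : ℝ))⁻¹ • (-A) ^ (2 * k)) = 0 := by
        intro k
        rw [Even.neg_pow ⟨k, by ring⟩, sub_self]
      simpa [this] using (hasSum_zero : HasSum (fun _ : ℕ => (0 : Matrix (Fin 3) (Fin 3) ℝ)) 0)
    have hodd : HasSum (fun k : ℕ => ((((2 * k + 1).factorial : ℝ))⁻¹ • A ^ (2 * k + 1) -
        (((2 * k + 1).factorial : ℝ))⁻¹ • (-A) ^ (2 * k + 1))) ((2 * Real.sin r / r) • A) := by
      have hcoef : HasSum (fun k : ℕ => (2 / r) * ((-1) ^ k * r ^ (2 * k + 1) / ((2 * k + 1).factorial : ℝ)))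
          ((2 / r) * Real.sin r) := (Real.hasSum_sin r).mul_left _
      have hterm : ∀ k : ℕ, ((((2 * k + 1).factorial : ℝ))⁻¹ • A ^ (2 * k + 1) -
          (((2 * k + 1).factorial : ℝ))⁻¹ • (-A) ^ (2 * k + 1)) =
          ((2 / r) * ((-1) ^ k * r ^ (2 * k + 1) / ((2 * k + 1).factorial : ℝ))) • A := by
        intro k
        rw [Odd.neg_pow ⟨k, by ring⟩, smul_neg, sub_neg_eq_add, hA, hat_odd_pow, hr2]
        rw [← hA, smul_smul, ← two_smul ℝ, smul_smul]
        congr 1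
        have hrk : r ^ (2 * k + 1) = r * (r ^ 2) ^ k := by
          rw [pow_succ', pow_mul]
        rw [hrk, neg_pow]
        field_simp
      have h2 := hcoef.smul_const A
      rw [show (2 / r) * Real.sin r = 2 * Real.sin r / r by ring] at h2
      rw [funext hterm]
      exact h2
    have := HasSum.even_add_odd (f := fun n : ℕ => ((n.factorial : ℝ)⁻¹ • A ^ n -
        (n.factorial : ℝ)⁻¹ • (-A) ^ n)) heven hodd
    rwa [zero_add] at this
  have hsub : NormedSpace.exp A - NormedSpace.exp (-A) = (2 * Real.sin r / r) • A := by
    rw [NormedSpace.exp_eq_tsum ℝ]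
    beta_reduce
    erw [← Summable.tsum_sub (NormedSpace.expSeries_summable' (𝕂 := ℝ) A)
      (NormedSpace.expSeries_summable' (𝕂 := ℝ) (-A))]
    exact hsum.tsum_eq
  rw [htr, hsub, smul_smul]
  rw [show r / (2 * Real.sin r) * (2 * Real.sin r / r) = 1 by
    field_simp]
  rw [one_smul]
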